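/- Let Φ be a completely positive trace-preserving map on the trace class B¹(H) of a complex Hilbert space H, given by Kraus operators (K_j)_{j∈J} with ∑_j K_j*K_j = 1 strongly. Then there exist a Hilbert space K = ℓ²(J) ⊗ ℂ², a unit vector ψ = e_{j₀} ⊗ e₁ ∈ K (for any fixed j₀ ∈ J), and a unitary operator U on H ⊗ K such that Φ(ρ) = tr_K(U (ρ ⊗ |ψ⟩⟨ψ|) U*) for all ρ ∈ B¹(H). -/

import Mathlib

open ContinuousLinearMap

variable {ι : Type*} [DecidableEq ι] {H : Type*} [NormedAddCommGroup H] [InnerProductSpace ℂ H]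

/-- `x ↦ x ⊗ e_i`: the isometric embedding of `H` onto the `i`-th summand of
`H ⊗ ℓ²(ι) ≅ ⊕²_ι H` (modelled as `lp (fun _ : ι => H) 2`), as a continuous linear map. -/
noncomputable def lpSingleL (i : ι) : H →L[ℂ] lp (fun _ : ι => H) 2 :=
  LinearMap.mkContinuous
    { toFun := fun x => lp.single 2 i x
      map_add' := fun x y => by
        apply lp.ext; funext j
        by_cases h : j = i
        · subst h
          simp [lp.single_apply_self, lp.coeFn_add]
        · simp [lp.single_apply_ne _ _ _ h, lp.coeFn_add]
      map_smul' := fun c x => by simp }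
    1 (fun x => by
        simpa using (lp.norm_single (p := 2) (E := fun _ : ι => H) (by norm_num)
          (fun _ => x) i).le)

/-- `(1 ⊗ ⟨e_i|)`: evaluation of the `i`-th component of `H ⊗ ℓ²(ι) ≅ ⊕²_ι H`,
as a continuous linear map. -/
noncomputable def lpProjL (i : ι) : lp (fun _ : ι => H) 2 →L[ℂ] H :=
  LinearMap.mkContinuous
    { toFun := fun f => f i
      map_add' := fun f g => by simp [lp.coeFn_add]
      map_smul' := fun c f => by simp [lp.coeFn_smul] }
    1 (fun f => by rw [one_mul]; exact lp.norm_apply_le_norm (by norm_num) f i)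


open scoped ENNReal

section StinespringAux

lemma lpSingleL_apply (i : ι) (x : H) :
    lpSingleL i x = lp.single 2 i x := rfl

lemma lpProjL_apply (i : ι) (f : lp (fun _ : ι => H) 2) : lpProjL i f = f i := rfl

lemma adjoint_lpSingleL [CompleteSpace H] (i : ι) :
    ContinuousLinearMap.adjoint (lpSingleL (H := H) i) = lpProjL i := by
  symm
  rw [ContinuousLinearMap.eq_adjoint_iff]
  intro f y
  exact (lp.inner_single_right (𝕜 := ℂ) i y f).symm

end StinespringAux

set_option maxHeartbeats 1600000

/-- Theorem 1: let `Φ` be a (completely positive) trace-preserving map on the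
trace class `B¹(H)` (viewed here as a linear map on operators), given by Kraus operators
`(K_j)_{j∈J}` with `∑_j K_j* K_j = 1` strongly, i.e. `Φ(ρ) = ∑_j K_j ρ K_j*` (the sum
converging pointwise/strongly).  Then with the environment `K := ℓ²(J) ⊗ ℂ²` and the unit
vector `ψ := e_{j₀} ⊗ e₁` (for any fixed `j₀ ∈ J`) there is a unitary `U` on `H ⊗ K` with
`Φ(ρ) = tr_K (U (ρ ⊗ |ψ⟩⟨ψ|) U*)` for all `ρ`.

Here `H ⊗ K` is modelled as `lp (fun _ : J × Fin 2 => H) 2` (the index `(j, i)`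
corresponding to the basis vector `e_j ⊗ e_{i+1}` of `K`, so `ψ` is the index `(j₀, 0)`);
`ρ ⊗ |ψ⟩⟨ψ|` is the operator `(1 ⊗ |ψ⟩) ρ (1 ⊗ ⟨ψ|) = lpSingleL (j₀,0) ∘ ρ ∘ lpProjL (j₀,0)`,
and the partial trace identity `tr_K(A) = ∑_m (1 ⊗ ⟨e_m|) A (1 ⊗ |e_m⟩)` is expressed
strongly: for each `x`, the family `m ↦ (1 ⊗ ⟨e_m|) (U (ρ⊗|ψ⟩⟨ψ|) U*) (1 ⊗ |e_m⟩) x`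
sums to `Φ(ρ) x`. -/
theorem stinespring_form_of_kraus
    [CompleteSpace H] {J : Type*} [DecidableEq J] (j₀ : J)
    (K : J → H →L[ℂ] H)
    (hK : ∀ x : H, HasSum (fun j => adjoint (K j) ((K j) x)) x)
    (Φ : (H →L[ℂ] H) →ₗ[ℂ] (H →L[ℂ] H))
    (hΦ : ∀ (ρ : H →L[ℂ] H) (x : H),
      HasSum (fun j => (K j) (ρ ((adjoint (K j)) x))) (Φ ρ x)) :
    ∃ U ∈ unitary (lp (fun _ : J × Fin 2 => H) 2 →L[ℂ] lp (fun _ : J × Fin 2 => H) 2),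
      ∀ (ρ : H →L[ℂ] H) (x : H),
        HasSum
          (fun m : J × Fin 2 =>
            lpProjL m
              ((U * (lpSingleL ((j₀, 0) : J × Fin 2) ∘L ρ ∘L lpProjL ((j₀, 0) : J × Fin 2))
                  * star U) (lpSingleL m x)))
          (Φ ρ x) := by
    classical
  set c : J × Fin 2 := (j₀, 0) with hc
  have hinj : Function.Injective (fun j : J => ((j, 1) : J × Fin 2)) := by
    intro a b h
    exact (Prod.mk.injEq _ _ _ _ ▸ h).1
  have hnr : ∀ m : J × Fin 2, m ∉ Set.range (fun j : J => ((j, 1) : J × Fin 2)) → m.2 ≠ 1 := by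
    intro m hm h
    exact hm ⟨m.1, by rw [← Prod.mk.eta (p := m), h]⟩
  -- basic summability facts
  have hns : ∀ x : H, HasSum (fun j => ‖K j x‖ ^ 2) (‖x‖ ^ 2) := by
    intro x
    have h1 : HasSum (fun j => (inner ℂ x (adjoint (K j) (K j x)) : ℂ)) (inner ℂ x x) :=
      (hK x).mapL (innerSL ℂ x)
    have h1' : HasSum (fun j => (inner ℂ (K j x) (K j x) : ℂ)) (inner ℂ x x : ℂ) := by
      simpa only [ContinuousLinearMap.adjoint_inner_right] using h1
    have h2 := h1'.mapL RCLike.reCLM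
    simpa only [RCLike.reCLM_apply, inner_self_eq_norm_sq] using h2
  have hsum2 : ∀ x : H,
      HasSum (fun m : J × Fin 2 => ‖if m.2 = 1 then K m.1 x else 0‖ ^ 2) (‖x‖ ^ 2) := by
    intro x
    refine (Function.Injective.hasSum_iff hinj ?_).mp ?_
    · intro m hm
      simp [hnr m hm]
    · simpa [Function.comp_def] using hns x
  have hmem : ∀ x : H,
      Memℓp (fun m : J × Fin 2 => if m.2 = 1 then K m.1 x else 0) 2 := by
    intro x
    apply memℓp_gen
    have h2 : ((2 : ℝ≥0∞).toReal) = ((2 : ℕ) : ℝ) := by norm_num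
    rw [h2]
    have h3 := (hsum2 x).summable
    simpa [Real.rpow_natCast] using h3
  -- the Kraus isometry `V`
  let Vlin : H →ₗ[ℂ] lp (fun _ : J × Fin 2 => H) 2 :=
    { toFun := fun x => ⟨fun m => if m.2 = 1 then K m.1 x else 0, hmem x⟩
      map_add' := fun x y => by
        apply lp.ext; funext m
        rw [lp.coeFn_add, Pi.add_apply]
        show (if m.2 = 1 then K m.1 (x + y) else 0)
          = (if m.2 = 1 then K m.1 x else 0) + (if m.2 = 1 then K m.1 y else 0)
        by_cases h : m.2 = 1 <;> simp [h]
      map_smul' := fun a x => by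
        apply lp.ext; funext m
        rw [lp.coeFn_smul, Pi.smul_apply]
        show (if m.2 = 1 then K m.1 (a • x) else 0)
          = a • (if m.2 = 1 then K m.1 x else 0)
        by_cases h : m.2 = 1 <;> simp [h]
      }
  have hVlinapply : ∀ (x : H) (m : J × Fin 2),
      (Vlin x) m = if m.2 = 1 then K m.1 x else 0 := fun x m => rfl
  have hVnorm : ∀ x : H, ‖Vlin x‖ ≤ 1 * ‖x‖ := by
    intro x
    rw [one_mul]
    have h2 : ‖Vlin x‖ ^ ((2 : ℝ≥0∞).toReal) = ‖x‖ ^ ((2 : ℝ≥0∞).toReal) := by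
      have hp : 0 < (2 : ℝ≥0∞).toReal := by norm_num
      rw [lp.norm_rpow_eq_tsum hp (Vlin x)]
      have h2' : ((2 : ℝ≥0∞).toReal) = ((2 : ℕ) : ℝ) := by norm_num
      calc ∑' m : J × Fin 2, ‖(Vlin x) m‖ ^ ((2 : ℝ≥0∞).toReal)
          = ∑' m : J × Fin 2, ‖if m.2 = 1 then K m.1 x else 0‖ ^ (2 : ℕ) := by
            congr 1; funext m; rw [hVlinapply x m, h2', Real.rpow_natCast]
        _ = ‖x‖ ^ (2 : ℕ) := (hsum2 x).tsum_eq
        _ = ‖x‖ ^ ((2 : ℝ≥0∞).toReal) := by rw [h2', Real.rpow_natCast]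
    have h2' : ((2 : ℝ≥0∞).toReal) = ((2 : ℕ) : ℝ) := by norm_num
    rw [h2', Real.rpow_natCast, Real.rpow_natCast] at h2
    have h5 := congrArg Real.sqrt h2
    rw [Real.sqrt_sq (norm_nonneg _), Real.sqrt_sq (norm_nonneg _)] at h5
    exact le_of_eq h5
  let V : H →L[ℂ] lp (fun _ : J × Fin 2 => H) 2 := Vlin.mkContinuous 1 hVnorm
  have hVapply : ∀ (x : H) (m : J × Fin 2),
      (V x) m = if m.2 = 1 then K m.1 x else 0 := fun x m => rfl
  -- inner product identities
  have hVinner : ∀ x y : H, (inner ℂ (V x) (V y) : ℂ) = inner ℂ x y := by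
    intro x y
    have h1 : HasSum (fun j : J => (inner ℂ (K j x) (K j y) : ℂ)) (inner ℂ x y : ℂ) := by
      have h0 := (hK y).mapL (innerSL ℂ x)
      simpa only [innerSL_apply_apply, ContinuousLinearMap.adjoint_inner_right] using h0
    have h2 : HasSum (fun m : J × Fin 2 =>
        (inner ℂ ((V x) m) ((V y) m) : ℂ)) (inner ℂ x y : ℂ) := by
      refine (Function.Injective.hasSum_iff hinj ?_).mp ?_
      · intro m hm
        simp [hVapply, hnr m hm]
      · simpa [Function.comp_def, hVapply] using h1
    exact ((lp.hasSum_inner (𝕜 := ℂ) (V x) (V y)).unique h2)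
  have hadjV_single : ∀ (m : J × Fin 2) (x : H),
      adjoint V (lpSingleL m x) = if m.2 = 1 then adjoint (K m.1) x else 0 := by
    intro m x
    apply ext_inner_right ℂ
    intro y
    rw [ContinuousLinearMap.adjoint_inner_left, lpSingleL_apply, lp.inner_single_left,
      hVapply y m]
    by_cases h : m.2 = 1
    · rw [if_pos h, if_pos h, ContinuousLinearMap.adjoint_inner_left]
    · rw [if_neg h, if_neg h]
      simp
  -- the four basic operator relations
  have hSS : adjoint (lpSingleL (H := H) c) ∘L lpSingleL c = 1 := by
    ext x
    simp only [ContinuousLinearMap.coe_comp', Function.comp_apply, adjoint_lpSingleL,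
      ContinuousLinearMap.one_apply, lpProjL_apply, lpSingleL_apply]
    exact lp.single_apply_self (E := fun _ : J × Fin 2 => H) 2 c x
  have hVV : adjoint V ∘L V = 1 := by
    ext x
    apply ext_inner_right ℂ
    intro y
    simp only [ContinuousLinearMap.coe_comp', Function.comp_apply,
      ContinuousLinearMap.adjoint_inner_left, ContinuousLinearMap.one_apply]
    exact hVinner x y
  have hSV : adjoint (lpSingleL (H := H) c) ∘L V = 0 := by
    ext x
    simp only [ContinuousLinearMap.coe_comp', Function.comp_apply, adjoint_lpSingleL,
      ContinuousLinearMap.zero_apply, lpProjL_apply]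
    rw [hVapply x c]
    norm_num [hc]
  have hVS : adjoint V ∘L lpSingleL (H := H) c = 0 := by
    ext x
    simp only [ContinuousLinearMap.coe_comp', Function.comp_apply,
      ContinuousLinearMap.zero_apply]
    rw [hadjV_single c x]
    norm_num [hc]
  -- reduction lemmas in right-associated form
  have hSS' : ∀ (T : lp (fun _ : J × Fin 2 => H) 2 →L[ℂ] H),
      adjoint (lpSingleL (H := H) c) ∘L (lpSingleL c ∘L T) = T := by
    intro T; rw [← ContinuousLinearMap.comp_assoc, hSS, ContinuousLinearMap.one_def,
      ContinuousLinearMap.id_comp]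
  have hVV' : ∀ (T : lp (fun _ : J × Fin 2 => H) 2 →L[ℂ] H),
      adjoint V ∘L (V ∘L T) = T := by
    intro T; rw [← ContinuousLinearMap.comp_assoc, hVV, ContinuousLinearMap.one_def,
      ContinuousLinearMap.id_comp]
  have hSV' : ∀ (T : lp (fun _ : J × Fin 2 => H) 2 →L[ℂ] H),
      adjoint (lpSingleL (H := H) c) ∘L (V ∘L T) = 0 := by
    intro T; rw [← ContinuousLinearMap.comp_assoc, hSV, ContinuousLinearMap.zero_comp]
  have hVS' : ∀ (T : lp (fun _ : J × Fin 2 => H) 2 →L[ℂ] H),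
      adjoint V ∘L (lpSingleL c ∘L T) = 0 := by
    intro T; rw [← ContinuousLinearMap.comp_assoc, hVS, ContinuousLinearMap.zero_comp]
  -- the unitary
  set W : lp (fun _ : J × Fin 2 => H) 2 →L[ℂ] lp (fun _ : J × Fin 2 => H) 2 :=
    1 - lpSingleL c ∘L adjoint (lpSingleL c) - V ∘L adjoint V
      + lpSingleL c ∘L adjoint V + V ∘L adjoint (lpSingleL c) with hW
  have hWadj : adjoint W = W := by
    rw [hW]
    simp only [map_add, map_sub, ContinuousLinearMap.adjoint_comp,
      ContinuousLinearMap.adjoint_adjoint]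
    have h1 : adjoint (1 : lp (fun _ : J × Fin 2 => H) 2 →L[ℂ] lp (fun _ : J × Fin 2 => H) 2)
        = 1 := by
      rw [ContinuousLinearMap.one_def, ContinuousLinearMap.adjoint_id]
    rw [h1]
    abel
  have hWstar : star W = W := by rw [ContinuousLinearMap.star_eq_adjoint, hWadj]
  have hWW : W ∘L W = 1 := by
    rw [hW]
    simp only [ContinuousLinearMap.add_comp, ContinuousLinearMap.sub_comp,
      ContinuousLinearMap.comp_add, ContinuousLinearMap.comp_sub,
      ContinuousLinearMap.comp_assoc, ContinuousLinearMap.one_def,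
      ContinuousLinearMap.id_comp, ContinuousLinearMap.comp_id,
      hSS', hVV', hSV', hVS', ContinuousLinearMap.comp_zero, ContinuousLinearMap.zero_comp]
    abel
  have hWS : W ∘L lpSingleL c = V := by
    rw [hW]
    simp only [ContinuousLinearMap.add_comp, ContinuousLinearMap.sub_comp,
      ContinuousLinearMap.comp_assoc, ContinuousLinearMap.one_def,
      ContinuousLinearMap.id_comp, hSS, hSV, hVV, hVS,
      ContinuousLinearMap.comp_zero, ContinuousLinearMap.comp_id]
    abel
  have hSW : adjoint (lpSingleL (H := H) c) ∘L W = adjoint V := by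
    have h1 := congrArg ContinuousLinearMap.adjoint hWS
    rwa [ContinuousLinearMap.adjoint_comp, hWadj] at h1
  refine ⟨W, Unitary.mem_iff.mpr ⟨?_, ?_⟩, ?_⟩
  · rw [hWstar]; exact hWW
  · rw [hWstar]; exact hWW
  intro ρ x
  have hterm : ∀ m : J × Fin 2,
      lpProjL m ((W * (lpSingleL c ∘L ρ ∘L lpProjL c) * star W) (lpSingleL m x))
        = if m.2 = 1 then K m.1 (ρ (adjoint (K m.1) x)) else 0 := by
    intro m
    rw [hWstar]
    have h0 : (W * (lpSingleL c ∘L ρ ∘L lpProjL c) * W) (lpSingleL m x)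
        = W (lpSingleL c (ρ (lpProjL c (W (lpSingleL m x))))) := rfl
    rw [h0]
    have h1 : lpProjL c (W (lpSingleL m x)) = adjoint V (lpSingleL m x) := by
      rw [← adjoint_lpSingleL]
      exact DFunLike.congr_fun hSW (lpSingleL m x)
    rw [h1, hadjV_single m x]
    have h2 : ∀ z : H, W (lpSingleL c z) = V z := fun z =>
      DFunLike.congr_fun hWS z
    by_cases h : m.2 = 1
    · rw [if_pos h, if_pos h, h2]
      rw [lpProjL_apply, hVapply, if_pos h]
    · rw [if_neg h, if_neg h]
      simp only [map_zero]
  simp only [hterm]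
  refine (Function.Injective.hasSum_iff hinj ?_).mp ?_
  · intro m hm
    simp [hnr m hm]
  · simpa [Function.comp_def] using hΦ ρ x
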